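/- arXiv:1006.5385 — 3 statements merged into one kernel-verified Lean document; each statement's English description precedes it below -/
import Mathlib

section
/- Let n ≥ 1, let I ⊆ {1,…,n}×{1,…,n} be a set of index pairs, and let Σ̄ ∈ ℝ^{n×n} be invertible. Then the following are equivalent: (a) the inverse of Σ̄ vanishes at all transposed unspecified positions, i.e. (Σ̄⁻¹)_{ji} = 0 for every (i,j) ∈ I; (b) Σ̄ is a critical point of the determinant along the affine set of completions, i.e. for every matrix δΣ ∈ ℝ^{n×n} whose entries vanish outside I (that is, (δΣ)_{ij} = 0 whenever (i,j) ∉ I), the derivative at t = 0 of the function t ↦ det(Σ̄ + t·δΣ) is zero. -/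
open Matrix Polynomial

/-- Derivative of the determinant along a direction `dS` at an invertible point. -/
lemma deriv_det_eq (n : ℕ) (Sig dS : Matrix (Fin n) (Fin n) ℝ) (hSig : IsUnit Sig.det) :
    deriv (fun t : ℝ => (Sig + t • dS).det) 0 = Sig.det * (Sig⁻¹ * dS).trace := by
  set B := Sig⁻¹ * dS with hB
  set p : ℝ[X] := (det (1 + (X : ℝ[X]) • B.map C)).divX.divX with hp
  have hfun : ∀ t : ℝ, (Sig + t • dS).det =
      Sig.det * (1 + B.trace * t + p.eval t * t ^ 2) := by
    intro t
    have h1 : Sig + t • dS = Sig * (1 + t • B) := by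
      rw [mul_add, mul_one, Matrix.mul_smul, hB, ← Matrix.mul_assoc,
        Matrix.mul_nonsing_inv Sig hSig, Matrix.one_mul]
    rw [h1, Matrix.det_mul, Matrix.det_one_add_smul t B]
  have hderiv : HasDerivAt (fun t : ℝ => (Sig + t • dS).det) (Sig.det * B.trace) 0 := by
    have h2 : HasDerivAt (fun t : ℝ => 1 + B.trace * t + p.eval t * t ^ 2)
        (B.trace) 0 := by
      have hlin : HasDerivAt (fun t : ℝ => 1 + B.trace * t) B.trace 0 := by
        simpa using ((hasDerivAt_id (0:ℝ)).const_mul B.trace).const_add 1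
      have hq := (p.hasDerivAt 0).mul (hasDerivAt_pow 2 0)
      exact (hlin.add hq).congr_deriv (by simp)
    simpa [hfun] using h2.const_mul Sig.det
  exact hderiv.deriv

/-- **Main theorem (square case).** For an invertible completion `Sig` of a partial
matrix with unspecified positions `I`, the inverse vanishes at all transposed
unspecified positions iff `Sig` is a critical point of the determinant along the
affine set of completions. -/
theorem main_square (n : ℕ) (hn : 1 ≤ n) (I : Set (Fin n × Fin n))
    (Sig : Matrix (Fin n) (Fin n) ℝ) (hSig : IsUnit Sig.det) :
    (∀ i j, (i, j) ∈ I → Sig⁻¹ j i = 0) ↔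
      (∀ dS : Matrix (Fin n) (Fin n) ℝ,
        (∀ i j, (i, j) ∉ I → dS i j = 0) →
        deriv (fun t : ℝ => (Sig + t • dS).det) 0 = 0) := by
  constructor
  · intro h dS hdS
    rw [deriv_det_eq n Sig dS hSig]
    have : (Sig⁻¹ * dS).trace = 0 := by
      rw [Matrix.trace, Finset.sum_eq_zero]
      intro i _
      rw [Matrix.diag_apply, Matrix.mul_apply, Finset.sum_eq_zero]
      intro j _
      by_cases hij : (j, i) ∈ I
      · rw [h j i hij, zero_mul]
      · rw [hdS j i hij, mul_zero]
    rw [this, mul_zero]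
  · intro h i j hij
    have hd := h (Matrix.single i j 1) (by
      intro a b hab
      rw [Matrix.single_apply_of_ne]
      rintro ⟨rfl, rfl⟩
      exact hab hij)
    rw [deriv_det_eq n Sig _ hSig] at hd
    have htr : (Sig⁻¹ * Matrix.single i j 1).trace = Sig⁻¹ j i := by
      rw [Matrix.trace]
      rw [Finset.sum_eq_single j]
      · rw [Matrix.diag_apply, Matrix.mul_apply, Finset.sum_eq_single i]
        · simp
        · intro b _ hb
          rw [Matrix.single_apply_of_ne _ _ _ _ _ (by simp [Ne.symm hb]), mul_zero]
        · simp
      · intro b _ hb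
        rw [Matrix.diag_apply, Matrix.mul_apply, Finset.sum_eq_zero]
        intro c _
        rw [Matrix.single_apply_of_ne _ _ _ _ _ (by simp [Ne.symm hb]), mul_zero]
      · simp
    rw [htr] at hd
    rcases mul_eq_zero.mp hd with h0 | h0
    · exact absurd h0 hSig.ne_zero
    · exact h0
end

section
/- Let n ≤ p, let I ⊆ {1,…,n}×{1,…,p} be a set of index pairs, and let Σ̄ ∈ ℝ^{n×p} have full row rank n, with pseudo-inverse Σ̄^♯ = Σ̄ᵀ·(Σ̄·Σ̄ᵀ)⁻¹ ∈ ℝ^{p×n}. Then the following are equivalent: (a) (Σ̄^♯)_{ji} = 0 for every (i,j) ∈ I; (b) for every matrix δΣ ∈ ℝ^{n×p} whose entries vanish outside I, the derivative at t = 0 of the function t ↦ log det(((Σ̄ + t·δΣ)·(Σ̄ + t·δΣ)ᵀ)^{1/2}) is zero. -/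
open Matrix

/-- The positive semidefinite square root of a positive semidefinite real matrix
(and junk value `0` otherwise); for a positive definite `A` this is the unique
symmetric positive definite square root `A^{1/2}`. -/
noncomputable def matSqrt {n : ℕ} (A : Matrix (Fin n) (Fin n) ℝ) :
    Matrix (Fin n) (Fin n) ℝ :=
  open Classical in
  if h : A.PosSemidef then
    (h.1.eigenvectorUnitary : Matrix (Fin n) (Fin n) ℝ) *
      diagonal (Real.sqrt ∘ h.1.eigenvalues) *
      (star h.1.eigenvectorUnitary : Matrix (Fin n) (Fin n) ℝ)
  else 0

open Polynomial in
private lemma coeff_one_det_aux {m : ℕ} (K L : Matrix (Fin m) (Fin m) ℝ) :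
    ((1 + (X:ℝ[X]) • K.map C + (X:ℝ[X])^2 • L.map C).det).coeff 1 = K.trace := by
  have key : (X:ℝ[X])^2 ∣ ((1 + (X:ℝ[X]) • K.map C + (X:ℝ[X])^2 • L.map C).det
      - (1 + (X:ℝ[X]) • K.map C).det) := by
    rw [← Ideal.mem_span_singleton, ← Ideal.Quotient.eq]
    set φ := Ideal.Quotient.mk (Ideal.span {(X:ℝ[X])^2})
    rw [RingHom.map_det, RingHom.map_det]
    congr 1
    ext i j
    have hφ : φ ((X:ℝ[X])^2) = 0 := by
      rw [Ideal.Quotient.eq_zero_iff_mem]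
      exact Ideal.subset_span rfl
    simp only [RingHom.mapMatrix_apply, Matrix.map_apply, Matrix.add_apply, Matrix.smul_apply,
      smul_eq_mul, map_add, _root_.map_mul, hφ, zero_mul, add_zero]
  obtain ⟨c, hc⟩ := key
  have h1 : ((1 + (X:ℝ[X]) • K.map C + (X:ℝ[X])^2 • L.map C).det).coeff 1
      = ((1 + (X:ℝ[X]) • K.map C).det).coeff 1 := by
    have := congrArg (fun q => q.coeff 1) hc
    simp only [Polynomial.coeff_sub] at this
    rw [mul_comm, Polynomial.coeff_mul_X_pow'] at this
    simp at this
    linarith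
  rw [h1, Matrix.coeff_det_one_add_X_smul_one]

open Polynomial in
private lemma coeff_one_det {m : ℕ} (A E F : Matrix (Fin m) (Fin m) ℝ) (hA : IsUnit A.det) :
    ((A.map C + (X:ℝ[X]) • E.map C + (X:ℝ[X])^2 • F.map C).det).coeff 1
      = A.det * (A⁻¹ * E).trace := by
  have hfac : A.map C + (X:ℝ[X]) • E.map C + (X:ℝ[X])^2 • F.map C
      = A.map (C : ℝ →+* ℝ[X]) *
        (1 + (X:ℝ[X]) • (A⁻¹*E).map C + (X:ℝ[X])^2 • (A⁻¹*F).map C) := by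
    rw [mul_add, mul_add, mul_one, Matrix.mul_smul, Matrix.mul_smul,
      ← Matrix.map_mul, ← Matrix.map_mul,
      Matrix.mul_nonsing_inv_cancel_left _ _ hA, Matrix.mul_nonsing_inv_cancel_left _ _ hA]
  rw [hfac, Matrix.det_mul, ← RingHom.mapMatrix_apply, ← RingHom.map_det,
    Polynomial.coeff_C_mul, coeff_one_det_aux]

open Polynomial in
private lemma expand_claim {n p : ℕ} (Sig dS : Matrix (Fin n) (Fin p) ℝ) :
    (Sig.map (C:ℝ→+*ℝ[X]) + (X:ℝ[X]) • dS.map C) *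
      (Sig.map (C:ℝ→+*ℝ[X]) + (X:ℝ[X]) • dS.map C)ᵀ
    = (Sig * Sigᵀ).map C + (X:ℝ[X]) • (Sig * dSᵀ + dS * Sigᵀ).map C
        + (X:ℝ[X])^2 • (dS * dSᵀ).map C := by
  refine Matrix.ext fun i j => ?_
  simp only [Matrix.mul_apply, Matrix.add_apply, Matrix.smul_apply, Matrix.map_apply,
    Matrix.transpose_apply, smul_eq_mul, map_sum, _root_.map_mul, map_add,
    Finset.mul_sum, ← Finset.sum_add_distrib]
  refine Finset.sum_congr rfl fun k _ => by ring

open Polynomial in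
private lemma eval_claim {n p : ℕ} (Sig dS : Matrix (Fin n) (Fin p) ℝ) (t : ℝ) :
    ((((Sig.map (C:ℝ→+*ℝ[X]) + (X:ℝ[X]) • dS.map C) *
      (Sig.map (C:ℝ→+*ℝ[X]) + (X:ℝ[X]) • dS.map C)ᵀ).det).eval t)
    = ((Sig + t • dS) * (Sig + t • dS)ᵀ).det := by
  have h := RingHom.map_det (Polynomial.evalRingHom t)
    ((Sig.map (C:ℝ→+*ℝ[X]) + (X:ℝ[X]) • dS.map C) *
      (Sig.map (C:ℝ→+*ℝ[X]) + (X:ℝ[X]) • dS.map C)ᵀ)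
  simp only [Polynomial.coe_evalRingHom] at h
  rw [h]
  congr 1
  refine Matrix.ext fun i j => ?_
  simp only [RingHom.mapMatrix_apply, Matrix.map_apply, Matrix.mul_apply, Matrix.add_apply,
    Matrix.smul_apply, Matrix.transpose_apply, smul_eq_mul, map_sum]
  refine Finset.sum_congr rfl fun k _ => ?_
  simp only [map_add, _root_.map_mul, map_pow, Polynomial.coe_evalRingHom,
    Polynomial.eval_C, Polynomial.eval_X]

private lemma psd_det_nonneg {m : ℕ} {A : Matrix (Fin m) (Fin m) ℝ} (hA : A.PosSemidef) :
    0 ≤ A.det := by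
  rw [hA.isHermitian.det_eq_prod_eigenvalues]
  exact Finset.prod_nonneg fun i _ => hA.eigenvalues_nonneg i

private lemma psd_self_mul {n p : ℕ} (Sig : Matrix (Fin n) (Fin p) ℝ) :
    (Sig * Sigᵀ).PosSemidef := by
  have := Matrix.posSemidef_self_mul_conjTranspose Sig
  simpa using this

private lemma det_matSqrt {m : ℕ} {A : Matrix (Fin m) (Fin m) ℝ} (hA : A.PosSemidef) :
    (matSqrt A).det = Real.sqrt A.det := by
  rw [matSqrt, dif_pos hA]
  have hU : (hA.1.eigenvectorUnitary : Matrix (Fin m) (Fin m) ℝ).det *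
      (star hA.1.eigenvectorUnitary : Matrix (Fin m) (Fin m) ℝ).det = 1 := by
    rw [← Matrix.det_mul]; simp
  rw [Matrix.det_mul, Matrix.det_mul, Matrix.det_diagonal, hA.1.det_eq_prod_eigenvalues,
    Real.sqrt_prod _ (fun i _ => by simpa using hA.eigenvalues_nonneg i)]
  simp only [Function.comp_apply, RCLike.ofReal_real_eq_id, id]
  linear_combination (∏ i, Real.sqrt (hA.1.eigenvalues i)) * hU

private lemma isUnit_det_self_mul {n p : ℕ} (Sig : Matrix (Fin n) (Fin p) ℝ)
    (hrank : Sig.rank = n) : IsUnit (Sig * Sigᵀ).det := by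
  have h1 : (Sig * Sigᵀ).rank = n := by rw [Matrix.rank_self_mul_transpose, hrank]
  rw [← Matrix.isUnit_iff_isUnit_det, ← Matrix.mulVec_surjective_iff_isUnit]
  have h2 : LinearMap.range (Sig * Sigᵀ).mulVecLin = ⊤ := by
    apply Submodule.eq_top_of_finrank_eq
    rw [← Matrix.rank, h1, Module.finrank_fintype_fun_eq_card, Fintype.card_fin]
  exact LinearMap.range_eq_top.mp h2

open Polynomial in
private lemma deriv_main {n p : ℕ} (Sig dS : Matrix (Fin n) (Fin p) ℝ)
    (hrank : Sig.rank = n) :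
    deriv (fun t : ℝ =>
        Real.log (matSqrt ((Sig + t • dS) * (Sig + t • dS)ᵀ)).det) 0
      = ((Sig * Sigᵀ)⁻¹ * (Sig * dSᵀ + dS * Sigᵀ)).trace / 2 := by
  set A := Sig * Sigᵀ with hAdef
  have hA : IsUnit A.det := isUnit_det_self_mul Sig hrank
  have hApos : 0 < A.det := lt_of_le_of_ne (psd_det_nonneg (psd_self_mul Sig))
    (Ne.symm hA.ne_zero)
  set P : ℝ[X] := ((Sig.map (C:ℝ→+*ℝ[X]) + (X:ℝ[X]) • dS.map C) *
      (Sig.map (C:ℝ→+*ℝ[X]) + (X:ℝ[X]) • dS.map C)ᵀ).det with hPdef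
  have hev : ∀ t : ℝ, P.eval t = ((Sig + t • dS) * (Sig + t • dS)ᵀ).det :=
    fun t => eval_claim Sig dS t
  have hev0 : P.eval 0 = A.det := by
    rw [hev 0]; simp [hAdef]
  -- eventual positivity
  have hcont : ContinuousAt (fun t : ℝ => P.eval t) 0 := (Polynomial.continuous P).continuousAt
  have hpos : ∀ᶠ t : ℝ in nhds 0, 0 < P.eval t := by
    have : ∀ᶠ y in nhds (P.eval 0), 0 < y := by
      rw [hev0]; exact eventually_gt_nhds hApos
    exact hcont.eventually this
  -- eventual equality of the two functions
  have heq : (fun t : ℝ => Real.log (matSqrt ((Sig + t • dS) * (Sig + t • dS)ᵀ)).det)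
      =ᶠ[nhds 0] fun t : ℝ => Real.log (P.eval t) / 2 := by
    filter_upwards [hpos] with t ht
    have hpsd := psd_self_mul (Sig + t • dS)
    rw [det_matSqrt hpsd, ← hev t, Real.log_sqrt ht.le]
  rw [heq.deriv_eq]
  have hne : P.eval 0 ≠ 0 := by rw [hev0]; exact hApos.ne'
  have hD : HasDerivAt (fun t : ℝ => Real.log (P.eval t) / 2)
      ((P.derivative.eval 0 / P.eval 0) / 2) 0 :=
    ((Polynomial.hasDerivAt P 0).log hne).div_const 2
  rw [hD.deriv]
  have hcoeff : P.derivative.eval 0 = P.coeff 1 := by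
    rw [← Polynomial.coeff_zero_eq_eval_zero, Polynomial.coeff_derivative]
    simp
  have hP1 : P.coeff 1 = A.det * (A⁻¹ * (Sig * dSᵀ + dS * Sigᵀ)).trace := by
    rw [hPdef, expand_claim Sig dS]
    exact coeff_one_det A (Sig * dSᵀ + dS * Sigᵀ) (dS * dSᵀ) hA
  rw [hcoeff, hP1, hev0, mul_div_cancel_left₀ _ hApos.ne']

private lemma trace_reduce {n p : ℕ} (Sig dS : Matrix (Fin n) (Fin p) ℝ) :
    ((Sig * Sigᵀ)⁻¹ * (Sig * dSᵀ + dS * Sigᵀ)).trace / 2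
      = ∑ i, ∑ j, (Sigᵀ * (Sig * Sigᵀ)⁻¹) j i * dS i j := by
  set A := Sig * Sigᵀ with hAdef
  have hAsym : Aᵀ = A := by rw [hAdef, Matrix.transpose_mul, Matrix.transpose_transpose]
  have hinvsym : (A⁻¹)ᵀ = A⁻¹ := by rw [Matrix.transpose_nonsing_inv, hAsym]
  have h2 : (A⁻¹ * (dS * Sigᵀ)).trace = (A⁻¹ * (Sig * dSᵀ)).trace := by
    rw [← Matrix.trace_transpose (A⁻¹ * (dS * Sigᵀ)), Matrix.transpose_mul,
      Matrix.transpose_mul, Matrix.transpose_transpose, hinvsym, Matrix.trace_mul_comm]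
  rw [mul_add, Matrix.trace_add, h2]
  have h3 : (A⁻¹ * (Sig * dSᵀ)).trace = ∑ i, ∑ j, (Sigᵀ * A⁻¹) j i * dS i j := by
    have key : ∀ i j, (A⁻¹ * Sig) i j = (Sigᵀ * A⁻¹) j i := by
      intro i j
      have : Sigᵀ * A⁻¹ = (A⁻¹ * Sig)ᵀ := by
        rw [Matrix.transpose_mul, hinvsym]
      rw [this, Matrix.transpose_apply]
    rw [← Matrix.mul_assoc]
    simp only [Matrix.trace, Matrix.diag_apply, Matrix.mul_apply (M := A⁻¹ * Sig),
      Matrix.transpose_apply]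
    exact Finset.sum_congr rfl fun i _ => Finset.sum_congr rfl fun j _ => by rw [key]
  rw [h3]; ring


private lemma deriv_eq_sum {n p : ℕ} (Sig dS : Matrix (Fin n) (Fin p) ℝ)
    (hrank : Sig.rank = n) :
    deriv (fun t : ℝ =>
        Real.log (matSqrt ((Sig + t • dS) * (Sig + t • dS)ᵀ)).det) 0
      = ∑ i, ∑ j, (Sigᵀ * (Sig * Sigᵀ)⁻¹) j i * dS i j := by
  rw [deriv_main Sig dS hrank, trace_reduce Sig dS]

/-- **Main theorem (rectangular case).** For a full-row-rank completion
`Sig ∈ ℝ^{n×p}` (`n ≤ p`) of a partial matrix with unspecified positions `I`, the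
Moore–Penrose pseudo-inverse `Sig♯ = Sigᵀ (Sig Sigᵀ)⁻¹` vanishes at all
transposed unspecified positions iff `Sig` is a critical point of
`log det ((· ·ᵀ)^{1/2})` along the affine set of completions. -/
theorem main_rectangular (n p : ℕ) (hnp : n ≤ p) (I : Set (Fin n × Fin p))
    (Sig : Matrix (Fin n) (Fin p) ℝ) (hrank : Sig.rank = n) :
    (∀ i j, (i, j) ∈ I → (Sigᵀ * (Sig * Sigᵀ)⁻¹) j i = 0) ↔
      (∀ dS : Matrix (Fin n) (Fin p) ℝ,
        (∀ i j, (i, j) ∉ I → dS i j = 0) →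
        deriv (fun t : ℝ =>
          Real.log (matSqrt ((Sig + t • dS) * (Sig + t • dS)ᵀ)).det) 0 = 0) := by
  constructor
  · intro h dS hdS
    rw [deriv_eq_sum Sig dS hrank]
    refine Finset.sum_eq_zero fun i _ => Finset.sum_eq_zero fun j _ => ?_
    by_cases hij : (i, j) ∈ I
    · rw [h i j hij, zero_mul]
    · rw [hdS i j hij, mul_zero]
  · intro h i j hij
    have h2 := h (Matrix.single i j 1) (fun i' j' hne => by
      refine Matrix.single_apply_of_ne (i := i) (j := j) (c := (1:ℝ)) (i' := i') (j' := j') ?_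
      rintro ⟨rfl, rfl⟩
      exact hne hij)
    rw [deriv_eq_sum Sig _ hrank] at h2
    rw [← h2]
    rw [Finset.sum_eq_single i, Finset.sum_eq_single j]
    · simp [Matrix.single]
    · intro b _ hb
      rw [Matrix.single_apply_of_ne (i := i) (j := j) (c := (1:ℝ)) (i' := i) (j' := b) (by tauto),
        mul_zero]
    · intro hi; exact absurd (Finset.mem_univ j) hi
    · intro b _ hb
      refine Finset.sum_eq_zero fun j' _ => ?_
      rw [Matrix.single_apply_of_ne (i := i) (j := j) (c := (1:ℝ)) (i' := b) (j' := j') (by tauto),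
        mul_zero]
    · intro hi; exact absurd (Finset.mem_univ i) hi
end

section
/- Let I ⊆ {1,…,n}×{1,…,n} be symmetric (i.e. (i,j) ∈ I implies (j,i) ∈ I). Let Σ° ∈ ℝ^{n×n} be symmetric positive definite with ((Σ°)⁻¹)_{ij} = 0 for every (i,j) ∈ I. Then for every symmetric positive definite Σ ∈ ℝ^{n×n} satisfying Σ_{ij} = Σ°_{ij} for all (i,j) ∉ I, one has det Σ ≤ det Σ°. -/
open Matrix Finset
open scoped MatrixOrder

lemma herm_trace_eq_sum_eigs {n : ℕ} {M : Matrix (Fin n) (Fin n) ℝ}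
    (hM : M.IsHermitian) : M.trace = ∑ i, hM.eigenvalues i := by
  conv_lhs => rw [hM.spectral_theorem, Unitary.conjStarAlgAut_apply]
  rw [Matrix.trace_mul_cycle,
    show (star (hM.eigenvectorUnitary : Matrix (Fin n) (Fin n) ℝ)) *
      (hM.eigenvectorUnitary : Matrix (Fin n) (Fin n) ℝ) = 1 from
      Matrix.mem_unitaryGroup_iff'.mp hM.eigenvectorUnitary.2, one_mul,
    Matrix.trace_diagonal]
  simp

/-- For a positive semidefinite real matrix, `det M ≤ exp (trace M - n)`. -/
lemma psd_det_le_exp_trace {n : ℕ} {M : Matrix (Fin n) (Fin n) ℝ}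
    (hM : M.PosSemidef) : M.det ≤ Real.exp (M.trace - n) := by
  rw [hM.isHermitian.det_eq_prod_eigenvalues, herm_trace_eq_sum_eigs hM.isHermitian]
  simp only [RCLike.ofReal_real_eq_id, id_eq]
  have h1 : (∑ i, hM.isHermitian.eigenvalues i) - (n : ℝ)
      = ∑ i : Fin n, (hM.isHermitian.eigenvalues i - 1) := by
    rw [Finset.sum_sub_distrib]
    simp
  rw [h1, Real.exp_sum]
  apply Finset.prod_le_prod
  · intro i _
    exact hM.eigenvalues_nonneg i
  · intro i _
    have := Real.add_one_le_exp (hM.isHermitian.eigenvalues i - 1)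
    linarith

/-- **Dempster's maximum-determinant property.** Let `I` be a symmetric set of
unspecified positions and `So` a symmetric positive definite matrix whose
inverse vanishes at every position of `I` (the Dempster completion). Then every
symmetric positive definite matrix agreeing with `So` outside `I` has
determinant at most `det So`. -/
theorem dempster_max_det (n : ℕ) (I : Set (Fin n × Fin n))
    (hI : ∀ i j, (i, j) ∈ I → (j, i) ∈ I)
    (So : Matrix (Fin n) (Fin n) ℝ) (hSo : So.PosDef)
    (hinv : ∀ i j, (i, j) ∈ I → So⁻¹ i j = 0) :
    ∀ S : Matrix (Fin n) (Fin n) ℝ, S.PosDef →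
      (∀ i j, (i, j) ∉ I → S i j = So i j) → S.det ≤ So.det := by
  intro S hS hagree
  set R := CFC.sqrt So with hRdef
  have hR : R.PosSemidef := Matrix.nonneg_iff_posSemidef.mp (CFC.sqrt_nonneg So)
  have hRR : R * R = So := CFC.sqrt_mul_sqrt_self So (Matrix.nonneg_iff_posSemidef.mpr hSo.posSemidef)
  have hdetR : R.det * R.det = So.det := by rw [← det_mul, hRR]
  have hdetRne : R.det ≠ 0 := by
    intro h
    rw [h, mul_zero] at hdetR
    exact hSo.det_pos.ne' hdetR.symm
  have hRinvH : R⁻¹.IsHermitian := hR.isHermitian.inv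
  set M := R⁻¹ * S * R⁻¹ with hMdef
  have hMpsd : M.PosSemidef := by
    have := hS.posSemidef.mul_mul_conjTranspose_same R⁻¹
    rwa [hRinvH.eq] at this
  have hSoinv : R⁻¹ * R⁻¹ = So⁻¹ := by rw [← Matrix.mul_inv_rev, hRR]
  have htr : M.trace = (n : ℝ) := by
    have h1 : M.trace = (So⁻¹ * S).trace := by
      rw [hMdef, Matrix.trace_mul_cycle, hSoinv]
    have h2 : (So⁻¹ * S).trace = (So⁻¹ * So).trace := by
      simp only [Matrix.trace, Matrix.diag, Matrix.mul_apply]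
      refine Finset.sum_congr rfl fun i _ => Finset.sum_congr rfl fun j _ => ?_
      by_cases h : (j, i) ∈ I
      · rw [hinv i j (hI j i h)]
        ring
      · rw [hagree j i h]
    have h3 : So⁻¹ * So = 1 :=
      Matrix.nonsing_inv_mul So (isUnit_iff_ne_zero.mpr hSo.det_pos.ne')
    rw [h1, h2, h3, Matrix.trace_one]
    simp
  have hdetM : M.det = S.det / So.det := by
    rw [hMdef, det_mul, det_mul, det_nonsing_inv, Ring.inverse_eq_inv', ← hdetR]
    field_simp
  have hle := psd_det_le_exp_trace hMpsd
  rw [hdetM, htr, sub_self, Real.exp_zero] at hle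
  exact (div_le_one hSo.det_pos).mp hle
end
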